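/- Let δ > 0. There is no function f : (0, δ) → ℝ that is twice continuously differentiable with f(y) > 0 and f'(y) ≥ 0 for all y ∈ (0, δ), satisfies f(y) → 0 as y → 0⁺, and solves f'(y) f''(y) = 1/(2 f(y)²) on (0, δ). That is, the majorising ODE f' f'' = (1/2) f^{-2} admits no increasing positive solution emanating from a zero at the origin. -/

import Mathlib

open Set Filter

/-- For any `δ > 0`, the majorising ODE `f' f'' = 1/(2 f²)` admits no
increasing positive C² solution on `(0, δ)` with `f(y) → 0` as `y → 0⁺`. -/
theorem stmt_9 (δ : ℝ) (hδ : 0 < δ) :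
    ¬ ∃ f : ℝ → ℝ,
      ContDiffOn ℝ 2 f (Set.Ioo 0 δ) ∧
      (∀ y ∈ Set.Ioo 0 δ, 0 < f y) ∧
      (∀ y ∈ Set.Ioo 0 δ, 0 ≤ deriv f y) ∧
      Filter.Tendsto f (nhdsWithin 0 (Set.Ioi 0)) (nhds 0) ∧
      (∀ y ∈ Set.Ioo 0 δ,
        deriv f y * deriv (deriv f) y = 1 / (2 * (f y) ^ 2)) := by
  rintro ⟨f, hf, hpos, hder, hlim, hode⟩
  have hs : IsOpen (Ioo (0:ℝ) δ) := isOpen_Ioo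
  have hfd : DifferentiableOn ℝ f (Ioo 0 δ) := hf.differentiableOn two_ne_zero
  have hf1 : ContDiffOn ℝ 1 (deriv f) (Ioo 0 δ) :=
    hf.deriv_of_isOpen hs (by norm_num)
  have hfd' : DifferentiableOn ℝ (deriv f) (Ioo 0 δ) := hf1.differentiableOn one_ne_zero
  -- pointwise positivity of deriv f and deriv (deriv f)
  have hrhs : ∀ y ∈ Ioo (0:ℝ) δ, 0 < 1 / (2 * (f y) ^ 2) := by
    intro y hy
    have := hpos y hy
    positivity
  have hd_pos : ∀ y ∈ Ioo (0:ℝ) δ, 0 < deriv f y := by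
    intro y hy
    rcases (hder y hy).lt_or_eq with h | h
    · exact h
    · exfalso
      have := hode y hy
      rw [← h, zero_mul] at this
      exact (hrhs y hy).ne' this.symm
  have hd2_pos : ∀ y ∈ Ioo (0:ℝ) δ, 0 < deriv (deriv f) y := by
    intro y hy
    have h := hode y hy
    nlinarith [hrhs y hy, hd_pos y hy]
  -- deriv f is strictly monotone on (0, δ)
  have hmono : StrictMonoOn (deriv f) (Ioo 0 δ) := by
    apply strictMonoOn_of_deriv_pos (convex_Ioo 0 δ) hfd'.continuousOn
    intro x hx
    rw [interior_Ioo] at hx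
    exact hd2_pos x hx
  -- f y ≤ deriv f b * y for y = b, any b ∈ (0, δ)
  have key : ∀ b ∈ Ioo (0:ℝ) δ, f b ≤ deriv f b * b := by
    intro b hb
    set C := deriv f b with hC
    have hmonog : MonotoneOn (fun y => C * y - f y) (Ioc 0 b) := by
      apply monotoneOn_of_deriv_nonneg (convex_Ioc 0 b)
      · apply ContinuousOn.sub (continuous_const.mul continuous_id).continuousOn
        exact hfd.continuousOn.mono (fun y hy => ⟨hy.1, lt_of_le_of_lt hy.2 hb.2⟩)
      · rw [interior_Ioc]
        intro y hy
        have hy' : y ∈ Ioo (0:ℝ) δ := ⟨hy.1, hy.2.trans hb.2⟩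
        exact ((differentiableAt_const _).mul differentiableAt_id).sub
          (hfd.differentiableAt (hs.mem_nhds hy')) |>.differentiableWithinAt
      · rw [interior_Ioc]
        intro y hy
        have hy' : y ∈ Ioo (0:ℝ) δ := ⟨hy.1, hy.2.trans hb.2⟩
        have hdy : DifferentiableAt ℝ f y := hfd.differentiableAt (hs.mem_nhds hy')
        have hD : HasDerivAt (fun y => C * y - f y) (C - deriv f y) y := by
          have hD' : HasDerivAt (fun y => C * id y - f y) (C * 1 - deriv f y) y :=
            ((hasDerivAt_id y).const_mul C).sub hdy.hasDerivAt
          simpa using hD'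
        rw [hD.deriv]
        have : deriv f y < C := hmono hy' hb hy.2
        linarith
    -- take the limit y → 0⁺
    have hlim2 : Tendsto (fun y => C * y - f y) (nhdsWithin 0 (Ioi 0)) (nhds 0) := by
      have h1 : Tendsto (fun y : ℝ => C * y) (nhdsWithin 0 (Ioi 0)) (nhds 0) := by
        have h0 : Tendsto (fun y : ℝ => C * y) (nhds 0) (nhds (C * 0)) :=
          (continuous_const.mul continuous_id').tendsto 0
        rw [mul_zero] at h0
        exact h0.mono_left nhdsWithin_le_nhds
      simpa using h1.sub hlim
    have hev : ∀ᶠ y in nhdsWithin 0 (Ioi 0), C * y - f y ≤ C * b - f b := by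
      filter_upwards [self_mem_nhdsWithin,
        eventually_nhdsWithin_of_eventually_nhds (Filter.Tendsto.eventually_lt_const hb.1
          (tendsto_id (α := ℝ)))] with y hy1 hy2
      exact hmonog ⟨hy1, hy2.le⟩ ⟨hb.1, le_refl b⟩ hy2.le
    have := le_of_tendsto hlim2 hev
    linarith
  -- now derive a contradiction
  set y₀ := δ / 2 with hy₀
  have hy₀m : y₀ ∈ Ioo (0:ℝ) δ := ⟨by linarith, by linarith⟩
  set C := deriv f y₀ with hCdef
  have hC : 0 < C := hd_pos y₀ hy₀m
  have hfle : ∀ y ∈ Ioo (0:ℝ) y₀, f y ≤ C * y := by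
    intro y hy
    have hy' : y ∈ Ioo (0:ℝ) δ := ⟨hy.1, hy.2.trans hy₀m.2⟩
    have h1 := key y hy'
    have h2 : deriv f y < C := hmono hy' hy₀m hy.2
    nlinarith [hy.1]
  -- F y = (deriv f y)^2 + (C^2 * y)⁻¹ is monotone on (0, y₀)
  set F := fun y : ℝ => (deriv f y)^2 + (C^2 * y)⁻¹ with hF
  have hFderiv : ∀ y ∈ Ioo (0:ℝ) y₀, HasDerivAt F
      (2 * deriv f y * deriv (deriv f) y + (-(C^2) / (C^2 * y)^2)) y := by
    intro y hy
    have hy' : y ∈ Ioo (0:ℝ) δ := ⟨hy.1, hy.2.trans hy₀m.2⟩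
    have h1 : HasDerivAt (deriv f) (deriv (deriv f) y) y :=
      (hfd'.differentiableAt (hs.mem_nhds hy')).hasDerivAt
    have h2 : HasDerivAt (fun y => (deriv f y)^2) (2 * deriv f y * deriv (deriv f) y) y := by
      have : HasDerivAt (fun y => deriv f y ^ 2) ((2:ℕ) * deriv f y ^ (2 - 1) * deriv (deriv f) y) y :=
        h1.pow 2
      simpa [mul_comm, mul_assoc, mul_left_comm] using this
    have h3 : HasDerivAt (fun y : ℝ => (C^2 * y)⁻¹) (-(C^2) / (C^2 * y)^2) y := by
      have h4 : HasDerivAt (fun y : ℝ => C^2 * y) (C^2) y := by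
        simpa using (hasDerivAt_id y).const_mul (C^2)
      have hyp : 0 < y := hy.1
      have hne : C^2 * y ≠ 0 := by positivity
      exact h4.inv hne
    exact h2.add h3
  have hFmono : MonotoneOn F (Ioo 0 y₀) := by
    apply monotoneOn_of_deriv_nonneg (convex_Ioo 0 y₀)
    · exact fun y hy => ((hFderiv y hy).continuousAt).continuousWithinAt
    · rw [interior_Ioo]
      exact fun y hy => ((hFderiv y hy).differentiableAt).differentiableWithinAt
    · rw [interior_Ioo]
      intro y hy
      rw [(hFderiv y hy).deriv]
      have hyp : 0 < y := hy.1
      have hy' : y ∈ Ioo (0:ℝ) δ := ⟨hy.1, hy.2.trans hy₀m.2⟩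
      have hode' := hode y hy'
      have hfy := hpos y hy'
      have hle := hfle y hy
      have h1 : 2 * deriv f y * deriv (deriv f) y = 1 / (f y)^2 := by
        field_simp at hode' ⊢
        linarith
      rw [h1]
      rw [div_add_div _ _ (by positivity : (f y)^2 ≠ 0) (by positivity : (C^2*y)^2 ≠ 0)]
      apply div_nonneg _ (by positivity)
      have hsq : f y ^ 2 ≤ (C*y)^2 := by nlinarith
      nlinarith [mul_le_mul_of_nonneg_left hsq (sq_nonneg C)]
  -- F y ≥ (C^2 y)⁻¹ blows up: contradiction
  set y₁ := y₀ / 2 with hy₁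
  have hy₁m : y₁ ∈ Ioo (0:ℝ) y₀ := ⟨by positivity, by simp [hy₁]; linarith [hy₀m.1]⟩
  have hFy₁pos : 0 < F y₁ := by
    have : (0:ℝ) < (C^2 * y₁)⁻¹ := by positivity
    have := sq_nonneg (deriv f y₁)
    simp only [hF]
    positivity
  set y₂ := min (y₁ / 2) ((2 * C^2 * F y₁)⁻¹) with hy₂
  have hy₂pos : 0 < y₂ := lt_min (by linarith [hy₁m.1]) (by positivity)
  have hy₂m : y₂ ∈ Ioo (0:ℝ) y₀ := ⟨hy₂pos, lt_of_le_of_lt (min_le_left _ _)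
    (by linarith [hy₁m.2, hy₁m.1])⟩
  have hle12 : y₂ ≤ y₁ := le_trans (min_le_left _ _) (by linarith [hy₁m.1])
  have hFle : F y₂ ≤ F y₁ := hFmono hy₂m hy₁m hle12
  have hblow : 2 * F y₁ ≤ (C^2 * y₂)⁻¹ := by
    have h1 : y₂ ≤ (2 * C^2 * F y₁)⁻¹ := min_le_right _ _
    have h2 : C^2 * y₂ ≤ (2 * F y₁)⁻¹ := by
      rw [mul_inv] at h1
      calc C^2 * y₂ ≤ C^2 * ((2*F y₁)⁻¹ * (C^2)⁻¹) := by
            apply mul_le_mul_of_nonneg_left _ (by positivity)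
            rw [mul_inv] at h1
            calc y₂ ≤ (2:ℝ)⁻¹ * (C^2)⁻¹ * (F y₁)⁻¹ := h1
              _ = (2*F y₁)⁻¹ * (C^2)⁻¹ := by rw [mul_inv]; ring
        _ = (2 * F y₁)⁻¹ := by field_simp
    calc 2 * F y₁ = ((2 * F y₁)⁻¹)⁻¹ := by rw [inv_inv]
      _ ≤ (C^2 * y₂)⁻¹ := by
          exact inv_anti₀ (by positivity) h2
  have hge : (C^2 * y₂)⁻¹ ≤ F y₂ := by
    simp only [hF]
    nlinarith [sq_nonneg (deriv f y₂)]
  have h1 : (2:ℝ) * F y₁ ≤ F y₁ := le_trans hblow (le_trans hge hFle)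
  linarith
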